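/- Let ν : F → G : C → D be a multinatural transformation of multifunctors between closed multicategories. Then F̲_{X₁,…,Xₘ;Y} · D̲(FX₁,…,FXₘ; ν_Y) = ν_{C̲(X₁,…,Xₘ;Y)} · G̲_{X₁,…,Xₘ;Y} · D̲(ν_{X₁},…,ν_{Xₘ}; GY) as morphisms F C̲(X₁,…,Xₘ;Y) → D̲(FX₁,…,FXₘ;GY). -/

import Mathlib

universe u v

/-- A family of multimorphisms `f_i : Xss_i → Ys_i` (with matching lengths),
used to express simultaneous composition in a multicategory. -/
inductive HomFam (Obj : Type u) (Hom : List Obj → Obj → Type v) :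
    List (List Obj) → List Obj → Type (max u v)
  | nil : HomFam Obj Hom [] []
  | cons {Xs Y Xss Ys} : Hom Xs Y → HomFam Obj Hom Xss Ys →
      HomFam Obj Hom (Xs :: Xss) (Y :: Ys)

/-- A family of families of multimorphisms. -/
inductive FamFam (Obj : Type u) (Hom : List Obj → Obj → Type v) :
    List (List (List Obj)) → List (List Obj) → Type (max u v)
  | nil : FamFam Obj Hom [] []
  | cons {Xss Ys Xsss Yss} : HomFam Obj Hom Xss Ys → FamFam Obj Hom Xsss Yss →
      FamFam Obj Hom (Xss :: Xsss) (Ys :: Yss)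

variable {Obj : Type u} {Hom : List Obj → Obj → Type v}

/-- The family of identities on a list of objects. -/
def idFam (ident : ∀ X, Hom [X] X) : ∀ Ys : List Obj,
    HomFam Obj Hom (Ys.map fun y => [y]) Ys
  | [] => .nil
  | y :: ys => .cons (ident y) (idFam ident ys)

/-- Concatenation of families. -/
def appendFam : ∀ {A B C D}, HomFam Obj Hom A B → HomFam Obj Hom C D →
    HomFam Obj Hom (A ++ C) (B ++ D)
  | _, _, _, _, .nil, t => t
  | _, _, _, _, .cons f fs, t => .cons f (appendFam fs t)

/-- Flattening a family of families. -/
def flattenFam : ∀ {Xsss Yss}, FamFam Obj Hom Xsss Yss →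
    HomFam Obj Hom Xsss.flatten Yss.flatten
  | _, _, .nil => .nil
  | _, _, .cons fs fss => appendFam fs (flattenFam fss)

/-- Componentwise composition of a family of families with a family. -/
def zipComp
    (comp : ∀ {Xss Ys Z}, HomFam Obj Hom Xss Ys → Hom Ys Z → Hom Xss.flatten Z) :
    ∀ {Xsss Yss Zs}, FamFam Obj Hom Xsss Yss → HomFam Obj Hom Yss Zs →
      HomFam Obj Hom (Xsss.map List.flatten) Zs
  | _, _, _, .nil, .nil => .nil
  | _, _, _, .cons fs fss, .cons g gs => .cons (comp fs g) (zipComp comp fss gs)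

/-- A multicategory: objects, multimorphisms `X₁,…,Xₙ → Y`, identities and an
associative and unital simultaneous composition `(f₁,…,fₙ) · g`. -/
structure Multicategory : Type (max (u + 1) (v + 1)) where
  Obj : Type u
  Hom : List Obj → Obj → Type v
  ident : ∀ X : Obj, Hom [X] X
  comp : ∀ {Xss : List (List Obj)} {Ys : List Obj} {Z : Obj},
    HomFam Obj Hom Xss Ys → Hom Ys Z → Hom Xss.flatten Z
  id_comp : ∀ {Ys Z} (g : Hom Ys Z), HEq (comp (idFam ident Ys) g) g
  comp_id : ∀ {Xs Y} (f : Hom Xs Y), HEq (comp (.cons f .nil) (ident Y)) f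
  assoc : ∀ {Xsss Yss Zs Z} (fss : FamFam Obj Hom Xsss Yss)
    (gs : HomFam Obj Hom Yss Zs) (h : Hom Zs Z),
    HEq (comp (zipComp (fun fs g => comp fs g) fss gs) h)
        (comp (flattenFam fss) (comp gs h))

namespace Multicategory

variable (M : Multicategory.{u, v})

theorem map_singleton_flatten (l : List M.Obj) :
    (l.map fun x => [x]).flatten = l := by
  induction l <;> simp_all

theorem sflat (Xs Ys : List M.Obj) :
    ((Xs.map fun x => [x]) ++ [Ys]).flatten = Xs ++ Ys := by
  induction Xs <;> simp_all

theorem sflat2 (Xs Γ : List M.Obj) :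
    (Xs :: (Γ.map fun x => [x])).flatten = Xs ++ Γ := by
  simp [List.flatten_cons, map_singleton_flatten]

/-- `(1,…,1,f) · g` : plugging `f` into the last argument of `g`. -/
def plug {Xs Ys : List M.Obj} {H Z : M.Obj} (f : M.Hom Ys H)
    (g : M.Hom (Xs ++ [H]) Z) : M.Hom (Xs ++ Ys) Z :=
  cast (congrArg (M.Hom · Z) (M.sflat Xs Ys))
    (M.comp (appendFam (idFam M.ident Xs) (.cons f .nil)) g)

/-- `(f,1,…,1) · g` : plugging `f` into the first argument of `g`. -/
def plugFirst {Xs Γ : List M.Obj} {Y Z : M.Obj} (f : M.Hom Xs Y)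
    (g : M.Hom (Y :: Γ) Z) : M.Hom (Xs ++ Γ) Z :=
  cast (congrArg (M.Hom · Z) (M.sflat2 Xs Γ))
    (M.comp (.cons f (idFam M.ident Γ)) g)

/-- `(f) · h` : composing a multimorphism with a unary morphism. -/
def postcomp {Γ : List M.Obj} {Y Z : M.Obj} (f : M.Hom Γ Y) (h : M.Hom [Y] Z) :
    M.Hom Γ Z :=
  cast (congrArg (M.Hom · Z) (by simp : ([Γ].flatten : List M.Obj) = Γ))
    (M.comp (.cons f .nil) h)

/-- Composition in the underlying category. -/
def comp1 {X Y Z : M.Obj} (f : M.Hom [X] Y) (g : M.Hom [Y] Z) : M.Hom [X] Z :=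
  M.postcomp f g

/-- `(a, b) · g` : binary simultaneous composition. -/
def pair {As Bs : List M.Obj} {A' B' Cc : M.Obj} (a : M.Hom As A') (b : M.Hom Bs B')
    (g : M.Hom [A', B'] Cc) : M.Hom (As ++ Bs) Cc :=
  cast (congrArg (M.Hom · Cc) (by simp : ([As, Bs].flatten : List M.Obj) = As ++ Bs))
    (M.comp (.cons a (.cons b .nil)) g)

/-- `(f₁,…,fₘ,1) · g` for a family of unary morphisms `fᵢ`. -/
def sideComp {As Bs : List M.Obj} (fs : HomFam M.Obj M.Hom (As.map fun a => [a]) Bs)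
    {H Z : M.Obj} (g : M.Hom (Bs ++ [H]) Z) : M.Hom (As ++ [H]) Z :=
  cast (congrArg (M.Hom · Z) (M.sflat As [H]))
    (M.comp (appendFam fs (.cons (M.ident H) .nil)) g)

end Multicategory

/-- The image of a family of multimorphisms under a multifunctor. -/
def mapFam {M N : Multicategory.{u, v}} (obj : M.Obj → N.Obj)
    (map : ∀ {Xs Y}, M.Hom Xs Y → N.Hom (Xs.map obj) (obj Y)) :
    ∀ {Xss Ys}, HomFam M.Obj M.Hom Xss Ys →
      HomFam N.Obj N.Hom (Xss.map (List.map obj)) (Ys.map obj)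
  | _, _, .nil => .nil
  | _, _, .cons f fs => .cons (map f) (mapFam obj @map fs)

/-- A multifunctor between multicategories. -/
structure Multifunctor (M N : Multicategory.{u, v}) : Type (max u v) where
  obj : M.Obj → N.Obj
  map : ∀ {Xs Y}, M.Hom Xs Y → N.Hom (Xs.map obj) (obj Y)
  map_ident : ∀ X, map (M.ident X) = N.ident (obj X)
  map_comp : ∀ {Xss Ys Z} (fs : HomFam M.Obj M.Hom Xss Ys) (g : M.Hom Ys Z),
    HEq (map (M.comp fs g)) (N.comp (mapFam obj @map fs) (map g))

/-- A closed multicategory : a multicategory together with internal hom objects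
and evaluation morphisms such that `φ : f ↦ (1,…,1,f)·ev` is a bijection. -/
structure ClosedMulticategory extends Multicategory.{u, v} where
  ihom : List Obj → Obj → Obj
  ev : ∀ (Xs : List Obj) (Z : Obj), Hom (Xs ++ [ihom Xs Z]) Z
  closed : ∀ (Xs Ys : List Obj) (Z : Obj),
    Function.Bijective
      (fun f : Hom Ys (ihom Xs Z) => toMulticategory.plug f (ev Xs Z))

namespace ClosedMulticategory

variable (C : ClosedMulticategory.{u, v})

/-- The inverse of the bijection `φ` : currying. -/
noncomputable def curry {Xs Ys : List C.Obj} {Z : C.Obj}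
    (f : C.Hom (Xs ++ Ys) Z) : C.Hom Ys (C.ihom Xs Z) :=
  (Equiv.ofBijective _ (C.closed Xs Ys Z)).symm f

/-- The covariant action `C̲(W₁,…,Wₘ; h)` of a unary morphism `h` on internal
homs, defined by `(1,…,1,C̲(Ws;h)) · ev_{Ws;B} = ev_{Ws;A} · h`. -/
noncomputable def homCovM (Ws : List C.Obj) {A B : C.Obj} (h : C.Hom [A] B) :
    C.Hom [C.ihom Ws A] (C.ihom Ws B) :=
  C.curry (Xs := Ws) (C.toMulticategory.postcomp (C.ev Ws A) h)

/-- The contravariant action `C̲(h; Z)` of a unary morphism `h : A → B` on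
internal homs, defined by `(1,C̲(h;Z)) · ev_{A;Z} = (h,1) · ev_{B;Z}`. -/
noncomputable def homContra {A B : C.Obj} (h : C.Hom [A] B) (Z : C.Obj) :
    C.Hom [C.ihom [B] Z] (C.ihom [A] Z) :=
  C.curry (Xs := [A]) (C.toMulticategory.plugFirst h (C.ev [B] Z))

/-- The contravariant action `C̲(f₁,…,fₘ; Z)` of a family of unary morphisms on
internal homs. -/
noncomputable def homContraM {As Bs : List C.Obj}
    (fs : HomFam C.Obj C.Hom (As.map fun a => [a]) Bs) (Z : C.Obj) :
    C.Hom [C.ihom Bs Z] (C.ihom As Z) :=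
  C.curry (Xs := As) (C.toMulticategory.sideComp fs (C.ev Bs Z))

/-- Composition `μ` of the `C`-category `C̲`, determined by
`(1_X, μ)·ev_{X;Z} = (ev_{X;Y},1)·ev_{Y;Z}`. -/
noncomputable def mu (X Y Z : C.Obj) :
    C.Hom [C.ihom [X] Y, C.ihom [Y] Z] (C.ihom [X] Z) :=
  C.curry (Xs := [X])
    (C.toMulticategory.plugFirst (Xs := [X, C.ihom [X] Y]) (Γ := [C.ihom [Y] Z])
      (C.ev [X] Y) (C.ev [Y] Z))

/-- The identity `⟨1_X⟩ : () → C̲(X;X)` of the `C`-category `C̲`. -/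
noncomputable def oneHom (X : C.Obj) : C.Hom [] (C.ihom [X] X) :=
  C.curry (Xs := [X]) (Ys := []) (C.ident X)

/-- The morphism `L^X_{YZ} : C̲(Y;Z) → C̲(C̲(X;Y);C̲(X;Z))`, uniquely determined
by `(1, L^X_{YZ}) · ev = μ`. -/
noncomputable def Lhat (X Y Z : C.Obj) :
    C.Hom [C.ihom [Y] Z] (C.ihom [C.ihom [X] Y] (C.ihom [X] Z)) :=
  C.curry (Xs := [C.ihom [X] Y]) (C.mu X Y Z)

/-- The action `C̲(u;1) : C̲(1;X) → C̲(;X) = X` of a nullary morphism `u`. -/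
def uAct {one : C.Obj} (u : C.Hom [] one) (X : C.Obj) :
    C.Hom [C.ihom [one] X] X :=
  C.toMulticategory.plugFirst u (C.ev [one] X)

/-- `(one, u)` is a unit object of the closed multicategory `C` if all the
morphisms `C̲(u;1) : C̲(1;X) → X` are invertible. -/
def IsUnitObj (one : C.Obj) (u : C.Hom [] one) : Prop :=
  ∀ X : C.Obj, ∃ inv : C.Hom [X] (C.ihom [one] X),
    C.toMulticategory.comp1 (C.uAct u X) inv = C.ident (C.ihom [one] X) ∧
    C.toMulticategory.comp1 inv (C.uAct u X) = C.ident X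

end ClosedMulticategory

/-- The closing transformation `F̲_{Xs;Z} : F C̲(Xs;Z) → D̲(F Xs; FZ)` of a
multifunctor between closed multicategories, i.e. the unique morphism with
`(1,…,1,F̲) · ev^D = F(ev^C)`. -/
noncomputable def closingTrans {C D : ClosedMulticategory.{u, v}}
    (F : Multifunctor C.toMulticategory D.toMulticategory)
    (Xs : List C.Obj) (Z : C.Obj) :
    D.Hom [F.obj (C.ihom Xs Z)] (D.ihom (Xs.map F.obj) (F.obj Z)) :=
  D.curry (Xs := Xs.map F.obj)
    (cast (congrArg (D.Hom · (F.obj Z)) (List.map_append :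
      (Xs ++ [C.ihom Xs Z]).map F.obj = Xs.map F.obj ++ [C.ihom Xs Z].map F.obj))
      (F.map (C.ev Xs Z)))

/-- The family of components `ν_{X₁},…,ν_{Xₙ}` of a transformation along a list
of objects. -/
def appFam {M N : Multicategory.{u, v}} (Fo Go : M.Obj → N.Obj)
    (app : ∀ X : M.Obj, N.Hom [Fo X] (Go X)) :
    ∀ Xs : List M.Obj,
      HomFam N.Obj N.Hom ((Xs.map Fo).map fun a => [a]) (Xs.map Go)
  | [] => .nil
  | x :: xs => .cons (app x) (appFam Fo Go app xs)

/-- A multinatural transformation `ν : F → G` of multifunctors: components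
`ν_X : FX → GX` with `F(f)·ν_Y = (ν_{X₁},…,ν_{Xₙ})·G(f)`. -/
structure Multinat {M N : Multicategory.{u, v}} (F G : Multifunctor M N) :
    Type (max u v) where
  app : ∀ X : M.Obj, N.Hom [F.obj X] (G.obj X)
  natural : ∀ {Xs Y} (f : M.Hom Xs Y),
    N.postcomp (F.map f) (app Y)
      = cast (congrArg (N.Hom · (G.obj Y)) (N.map_singleton_flatten (Xs.map F.obj)))
          (N.comp (appFam F.obj G.obj app Xs) (G.map f))

section AuxProof

variable {Obj : Type u} {Hom : List Obj → Obj → Type v}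

theorem homFam_cons_congr {Xs Xs' : List Obj} {Y Y' : Obj}
    {Xss Xss' : List (List Obj)} {Ys Ys' : List Obj}
    (h1 : Xs = Xs') (h2 : Y = Y') (h3 : Xss = Xss') (h4 : Ys = Ys')
    {f : Hom Xs Y} {f' : Hom Xs' Y'} (hf : HEq f f')
    {fs : HomFam Obj Hom Xss Ys} {fs' : HomFam Obj Hom Xss' Ys'} (hfs : HEq fs fs') :
    HEq (HomFam.cons f fs) (HomFam.cons f' fs') := by
  subst h1; subst h2; subst h3; subst h4; cases hf; cases hfs; rfl

theorem appendFam_nil_heq : ∀ {A B} (fs : HomFam Obj Hom A B), HEq (appendFam fs .nil) fs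
  | _, _, .nil => HEq.rfl
  | _, _, .cons f fs =>
    homFam_cons_congr rfl rfl (by simp) (by simp) HEq.rfl (appendFam_nil_heq fs)

/-- Concatenation of families of families. -/
def appendFamFam : ∀ {A B C D}, FamFam Obj Hom A B → FamFam Obj Hom C D →
    FamFam Obj Hom (A ++ C) (B ++ D)
  | _, _, _, _, .nil, t => t
  | _, _, _, _, .cons f fs, t => .cons f (appendFamFam fs t)

/-- Wrap each member of a unary family into a singleton family. -/
def wrapFam : ∀ {As Bs : List Obj}, HomFam Obj Hom (As.map fun a => [a]) Bs →
    FamFam Obj Hom (As.map fun a => [[a]]) (Bs.map fun b => [b])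
  | [], _, .nil => .nil
  | _ :: _, _, .cons f fs => .cons (.cons f .nil) (wrapFam fs)

theorem sflat3 {α : Type u} (As Es : List α) :
    ((As.map fun a => [a]) ++ [Es]).flatten = As ++ Es := by
  induction As <;> simp_all

theorem wflat {α : Type u} (As : List α) (Es : List α) :
    ((As.map fun a => [[a]]) ++ [[Es]]).flatten = (As.map fun a => [a]) ++ [Es] := by
  induction As <;> simp_all

theorem wmapflat {α : Type u} (As : List α) (Es : List α) :
    ((As.map fun a => [[a]]) ++ [[Es]]).map List.flatten
      = (As.map fun a => [a]) ++ [Es] := by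
  induction As <;> simp_all

theorem flat_wrap {α : Type u} (l : List α) :
    (l.map fun a => [[a]]).flatten = l.map fun a => [a] := by
  induction l <;> simp_all

theorem flat_single {α : Type u} (l : List α) :
    (l.map fun a => [a]).flatten = l := by
  induction l <;> simp_all

end AuxProof

namespace Multicategory

variable (M : Multicategory.{u, v})

theorem comp_congr {Xss Xss' : List (List M.Obj)} {Ys Ys' : List M.Obj} {Z : M.Obj}
    (hX : Xss = Xss') (hY : Ys = Ys')
    {fs : HomFam M.Obj M.Hom Xss Ys} {fs' : HomFam M.Obj M.Hom Xss' Ys'}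
    (hfs : HEq fs fs') {g : M.Hom Ys Z} {g' : M.Hom Ys' Z} (hg : HEq g g') :
    HEq (M.comp fs g) (M.comp fs' g') := by
  subst hX; subst hY; cases hfs; cases hg; rfl

/-- `(f₁,…,fₘ,b) · g` : the common normal form. -/
def bicomp {As Bs Es : List M.Obj} {H Z : M.Obj}
    (fs : HomFam M.Obj M.Hom (As.map fun a => [a]) Bs) (b : M.Hom Es H)
    (g : M.Hom (Bs ++ [H]) Z) : M.Hom (As ++ Es) Z :=
  cast (congrArg (M.Hom · Z) (sflat3 As Es))
    (M.comp (appendFam fs (.cons b .nil)) g)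

theorem plug_eq_bicomp {Xs Ys : List M.Obj} {H Z : M.Obj} (f : M.Hom Ys H)
    (g : M.Hom (Xs ++ [H]) Z) : M.plug f g = M.bicomp (idFam M.ident Xs) f g := rfl

theorem sideComp_eq_bicomp {As Bs : List M.Obj}
    (fs : HomFam M.Obj M.Hom (As.map fun a => [a]) Bs) {H Z : M.Obj}
    (g : M.Hom (Bs ++ [H]) Z) : M.sideComp fs g = M.bicomp fs (M.ident H) g := rfl

theorem postcomp_ident {Xs : List M.Obj} {Y : M.Obj} (f : M.Hom Xs Y) :
    M.postcomp f (M.ident Y) = f :=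
  eq_of_heq ((cast_heq _ _).trans (M.comp_id f))

theorem ident_postcomp {A : M.Obj} {Y : M.Obj} (f : M.Hom [A] Y) :
    M.postcomp (M.ident A) f = f :=
  eq_of_heq ((cast_heq _ _).trans (M.id_comp f))

theorem zipA : ∀ {As Bs : List M.Obj}
    (fs : HomFam M.Obj M.Hom (As.map fun a => [a]) Bs)
    {Es : List M.Obj} {H₁ H₂ : M.Obj} (a : M.Hom Es H₁) (b : M.Hom [H₁] H₂),
    HEq (zipComp (fun fs g => M.comp fs g)
          (appendFamFam (wrapFam (idFam M.ident As)) (.cons (.cons a .nil) .nil))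
          (appendFam fs (.cons b .nil)))
        (appendFam fs (.cons (M.postcomp a b) .nil))
  | [], [], .nil, _, _, _, a, b =>
    homFam_cons_congr (by simp) rfl rfl rfl (cast_heq _ _).symm HEq.rfl
  | x :: xs, _ :: _, .cons f fs, _, _, _, a, b =>
    homFam_cons_congr (by simp) rfl (by simp [wmapflat]) rfl (M.id_comp f)
      (zipA fs a b)

theorem zipB : ∀ {As Bs : List M.Obj}
    (fs : HomFam M.Obj M.Hom (As.map fun a => [a]) Bs)
    {Es : List M.Obj} {H₁ H₂ : M.Obj} (a : M.Hom Es H₁) (b : M.Hom [H₁] H₂),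
    HEq (zipComp (fun fs g => M.comp fs g)
          (appendFamFam (wrapFam fs) (.cons (.cons a .nil) .nil))
          (appendFam (idFam M.ident Bs) (.cons b .nil)))
        (appendFam fs (.cons (M.postcomp a b) .nil))
  | [], [], .nil, _, _, _, a, b =>
    homFam_cons_congr (by simp) rfl rfl rfl (cast_heq _ _).symm HEq.rfl
  | x :: xs, _ :: _, .cons f fs, _, _, _, a, b =>
    homFam_cons_congr (by simp) rfl (by simp [wmapflat]) rfl (M.comp_id f)
      (zipB fs a b)

theorem flatA : ∀ {As Bs : List M.Obj}
    (fs : HomFam M.Obj M.Hom (As.map fun a => [a]) Bs)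
    {Es : List M.Obj} {H₁ : M.Obj} (a : M.Hom Es H₁),
    HEq (flattenFam (appendFamFam (wrapFam fs) (.cons (.cons a .nil) .nil)))
        (appendFam fs (.cons a .nil))
  | [], [], .nil, _, _, a => HEq.rfl
  | x :: xs, _ :: _, .cons f fs, _, _, a =>
    homFam_cons_congr rfl rfl (by simp [flat_wrap]) (by simp [flat_single]) HEq.rfl
      (flatA fs a)

theorem MA1 {As Bs : List M.Obj} {Es : List M.Obj} {H₁ H₂ Z : M.Obj}
    (fs : HomFam M.Obj M.Hom (As.map fun a => [a]) Bs)
    (a : M.Hom Es H₁) (b : M.Hom [H₁] H₂) (g : M.Hom (Bs ++ [H₂]) Z) :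
    M.bicomp fs (M.postcomp a b) g = M.plug a (M.bicomp fs b g) := by
  have h1 := M.assoc
    (appendFamFam (wrapFam (idFam M.ident As)) (.cons (.cons a .nil) .nil))
    (appendFam fs (.cons b .nil)) g
  refine eq_of_heq (((cast_heq _ _).trans ?_).trans (cast_heq _ _).symm)
  refine ((M.comp_congr (wmapflat As Es).symm rfl (M.zipA fs a b).symm HEq.rfl).trans
    h1).trans ?_
  exact M.comp_congr (wflat As Es) (sflat3 As [H₁]) (M.flatA (idFam M.ident As) a)
    (cast_heq _ _).symm

theorem MA2 {As Bs : List M.Obj} {Es : List M.Obj} {H₁ H₂ Z : M.Obj}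
    (fs : HomFam M.Obj M.Hom (As.map fun a => [a]) Bs)
    (a : M.Hom Es H₁) (b : M.Hom [H₁] H₂) (g : M.Hom (Bs ++ [H₂]) Z) :
    M.bicomp fs (M.postcomp a b) g = M.bicomp fs a (M.plug b g) := by
  have h1 := M.assoc
    (appendFamFam (wrapFam fs) (.cons (.cons a .nil) .nil))
    (appendFam (idFam M.ident Bs) (.cons b .nil)) g
  refine eq_of_heq (((cast_heq _ _).trans ?_).trans (cast_heq _ _).symm)
  refine ((M.comp_congr (wmapflat As Es).symm rfl (M.zipB fs a b).symm HEq.rfl).trans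
    h1).trans ?_
  exact M.comp_congr (wflat As Es) (sflat3 Bs [H₁]) (M.flatA fs a)
    (cast_heq _ _).symm

theorem plug_plug {Xs Es : List M.Obj} {H₁ H₂ Z : M.Obj}
    (a : M.Hom Es H₁) (b : M.Hom [H₁] H₂) (g : M.Hom (Xs ++ [H₂]) Z) :
    M.plug (M.postcomp a b) g = M.plug a (M.plug b g) :=
  M.MA1 (idFam M.ident Xs) a b g

theorem plug_postcomp {Xs Ys : List M.Obj} {H W Z : M.Obj}
    (f : M.Hom Ys H) (g : M.Hom (Xs ++ [H]) W) (h : M.Hom [W] Z) :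
    M.plug f (M.postcomp g h) = M.postcomp (M.plug f g) h := by
  have h1 := M.assoc
    (FamFam.cons (appendFam (idFam M.ident Xs) (.cons f .nil)) .nil)
    (HomFam.cons g .nil) h
  have e1 : HEq (M.comp (HomFam.cons (M.plug f g) HomFam.nil) h)
      (M.comp (zipComp (fun fs g => M.comp fs g)
        (FamFam.cons (appendFam (idFam M.ident Xs) (.cons f .nil)) .nil)
        (HomFam.cons g .nil)) h) :=
    M.comp_congr (by simp [sflat3, flat_single]) rfl
      (homFam_cons_congr (sflat3 Xs Ys).symm rfl rfl rfl (cast_heq _ _) HEq.rfl)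
      HEq.rfl
  have e2 : HEq
      (M.comp (flattenFam
        (FamFam.cons (appendFam (idFam M.ident Xs) (.cons f .nil)) .nil))
        (M.comp (HomFam.cons g HomFam.nil) h))
      (M.comp (appendFam (idFam M.ident Xs) (HomFam.cons f HomFam.nil))
        (M.postcomp g h)) :=
    M.comp_congr (by simp) (by simp) (appendFam_nil_heq _) (cast_heq _ _).symm
  exact eq_of_heq ((cast_heq _ _).trans
    (((e1.trans h1).trans e2).symm.trans (cast_heq _ _).symm))

end Multicategory

theorem Multicategory.postcomp_cast (M : Multicategory.{u, v})
    {L L' : List M.Obj} {W Z : M.Obj} (e : L = L') (x : M.Hom L W)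
    (h : M.Hom [W] Z) :
    M.postcomp (cast (congrArg (M.Hom · W) e) x) h
      = cast (congrArg (M.Hom · Z) e) (M.postcomp x h) := by
  subst e; rfl

theorem ClosedMulticategory.plug_curry (C : ClosedMulticategory.{u, v})
    {Xs Ys : List C.Obj} {Z : C.Obj} (f : C.Hom (Xs ++ Ys) Z) :
    C.toMulticategory.plug (C.curry f) (C.ev Xs Z) = f :=
  (Equiv.ofBijective _ (C.closed Xs Ys Z)).apply_symm_apply f

theorem appFam_append {M N : Multicategory.{u, v}} (Fo Go : M.Obj → N.Obj)
    (app : ∀ X : M.Obj, N.Hom [Fo X] (Go X)) :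
    ∀ (Xs : List M.Obj) (h : M.Obj),
      HEq (appFam Fo Go app (Xs ++ [h]))
        (appendFam (appFam Fo Go app Xs) (.cons (app h) .nil))
  | [], h => HEq.rfl
  | x :: xs, h =>
    homFam_cons_congr rfl rfl (by simp) (by simp) HEq.rfl
      (appFam_append Fo Go app xs h)

/-- For a multinatural transformation `ν : F → G` of
multifunctors between closed multicategories,
`F̲_{Xs;Y} · D̲(F Xs; ν_Y) = ν_{C̲(Xs;Y)} · G̲_{Xs;Y} · D̲(ν_{X₁},…,ν_{Xₘ}; GY)`
as morphisms `F C̲(Xs;Y) → D̲(F Xs; GY)`. -/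
theorem closing_multinat (C D : ClosedMulticategory.{u, v})
    (F G : Multifunctor C.toMulticategory D.toMulticategory)
    (ν : Multinat F G) (Xs : List C.Obj) (Y : C.Obj) :
    D.toMulticategory.comp1 (closingTrans F Xs Y)
        (D.homCovM (Xs.map F.obj) (ν.app Y))
      = D.toMulticategory.comp1 (ν.app (C.ihom Xs Y))
          (D.toMulticategory.comp1 (closingTrans G Xs Y)
            (D.homContraM (As := Xs.map F.obj) (Bs := Xs.map G.obj)
              (appFam F.obj G.obj ν.app Xs) (G.obj Y))) := by
  refine (D.closed (Xs.map F.obj) [F.obj (C.ihom Xs Y)] (G.obj Y)).1 ?_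
  simp only [Multicategory.comp1, ClosedMulticategory.homCovM,
    ClosedMulticategory.homContraM, closingTrans]
  rw [D.toMulticategory.plug_plug, D.toMulticategory.plug_plug,
    D.toMulticategory.plug_plug]
  conv_lhs => rw [D.plug_curry, D.toMulticategory.plug_postcomp, D.plug_curry,
    D.toMulticategory.postcomp_cast (List.map_append :
      (Xs ++ [C.ihom Xs Y]).map F.obj = Xs.map F.obj ++ [C.ihom Xs Y].map F.obj), ν.natural (C.ev Xs Y)]
  conv_rhs => rw [D.plug_curry, D.toMulticategory.sideComp_eq_bicomp,
    ← D.toMulticategory.MA1, D.toMulticategory.postcomp_ident,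
    ← D.toMulticategory.MA1, D.toMulticategory.MA2, D.plug_curry]
  refine eq_of_heq (((cast_heq _ _).trans (cast_heq _ _)).trans
    (HEq.trans ?_ (cast_heq _ _).symm))
  exact D.toMulticategory.comp_congr (by simp) (by simp)
    (appFam_append F.obj G.obj ν.app Xs (C.ihom Xs Y)) (cast_heq _ _).symm
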